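/- Let R be a commutative ring with 1, τ symmetric on nonzero non-units, τ_reg = τ ∩ (Reg(R) × Reg(R)). In any τ_reg-U-factorization a = λ a₁⋯aₙ⌈b₁⋯bₘ⌉ of a non-unit a, every non-unit factor is essential; that is, n = 0 (there are no non-unit inessential divisors), equivalently in the notation above each aᵢ is a unit. -/

import Mathlib

/-- `τ_reg := τ ∩ (Reg(R) × Reg(R))`. -/
def TauReg {R : Type*} [CommRing R] (τ : R → R → Prop) (x y : R) : Prop :=
  τ x y ∧ x ∈ nonZeroDivisors R ∧ y ∈ nonZeroDivisors R

/-- In any `τ_reg`-U-factorization `a = λ a₁⋯aₙ ⌈b₁⋯bₘ⌉` of a non-unit `a`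
(factors nonzero non-units, pairwise `τ_reg`-related, the `aᵢ` inessential,
the `bⱼ` essential), there are no inessential divisors: the list `A` of
inessential factors is empty. -/
theorem stmt_14 {R : Type*} [CommRing R] (τ : R → R → Prop)
    (hsym : ∀ x y, τ x y → τ y x)
    (a lam : R) (A B : List R) (hanu : ¬ IsUnit a)
    (hlam : IsUnit lam)
    (hne : ∀ b ∈ A ++ B, b ≠ 0 ∧ ¬ IsUnit b)
    (htau : (A ++ B).Pairwise (TauReg τ))
    (hprod : a = lam * (A.prod * B.prod))
    (hiness : ∀ x ∈ A, Ideal.span {x * B.prod} = Ideal.span ({B.prod} : Set R))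
    (hess : ∀ j : Fin B.length,
      Ideal.span ({(B.eraseIdx j).prod} : Set R) ≠ Ideal.span ({B.prod} : Set R)) :
    A = [] := by
  cases A with
  | nil => rfl
  | cons x rest =>
    exfalso
    rw [List.pairwise_append] at htau
    -- every b ∈ B is regular
    have hBreg : ∀ b ∈ B, b ∈ nonZeroDivisors R := fun b hb =>
      (htau.2.2 x List.mem_cons_self b hb).2.2
    have hBprod : B.prod ∈ nonZeroDivisors R :=
      Submonoid.list_prod_mem _ (fun b hb => hBreg b hb)
    have hx := hiness x List.mem_cons_self
    have hmem : B.prod ∈ Ideal.span ({x * B.prod} : Set R) := by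
      rw [hx]; exact Ideal.subset_span rfl
    rw [Ideal.mem_span_singleton] at hmem
    obtain ⟨c, hc⟩ := hmem
    have h0 : (1 - x * c) * B.prod = 0 := by linear_combination hc
    have h1 : (1 : R) - x * c = 0 := (mul_right_mem_nonZeroDivisors_eq_zero_iff hBprod).mp h0
    have hux : IsUnit x := IsUnit.of_mul_eq_one (b := c) (sub_eq_zero.mp h1).symm
    exact (hne x (by simp)).2 hux
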